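/- If q₁(dx) = ρ(x)dx is a measure on (0,1) with continuous density ρ satisfying ρ(y)·ρ(x/y)·(1/y) = ρ(x)·ρ((y−x)/(1−x))·(1/(1−x)) for all 0 < x < y < 1, then there exists a constant C ≥ 0 such that ρ(x) = C/(x(1−x)) for all 0 < x < 1. -/

import Mathlib

open Set Filter

private def Fd (ρ : ℝ → ℝ) (x : ℝ) : ℝ := ρ x * (x * (1 - x))

private lemma key1 (ρ : ℝ → ℝ)
    (heq : ∀ x y : ℝ, 0 < x → x < y → y < 1 →
      ρ y * ρ (x / y) * (1 / y) = ρ x * ρ ((y - x) / (1 - x)) * (1 / (1 - x)))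
    {x s : ℝ} (hx0 : 0 < x) (hx1 : x < 1) (hs0 : 0 < s) (hs1 : s < 1) :
    Fd ρ x * Fd ρ s = Fd ρ (x + s - x*s) * Fd ρ (x / (x + s - x*s)) := by
  have hxm : x < x + s - x*s := by nlinarith
  have hm1 : x + s - x*s < 1 := by nlinarith
  have hm0 : (0:ℝ) < x + s - x*s := hx0.trans hxm
  have h := heq x (x + s - x*s) hx0 hxm hm1
  have hx1' : (1:ℝ) - x ≠ 0 := by linarith
  have hms : (x + s - x*s - x) / (1 - x) = s := by
    field_simp; ring
  rw [hms] at h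
  have h3 : ρ (x + s - x*s) * ρ (x/(x + s - x*s)) = ρ x * ρ s * (x + s - x*s) / (1 - x) := by
    field_simp at h
    field_simp
    linarith
  have e1 : 1 - x / (x + s - x*s) = (s*(1-x)) / (x + s - x*s) := by
    field_simp; ring
  unfold Fd
  rw [e1]
  calc ρ x * (x * (1 - x)) * (ρ s * (s * (1 - s)))
      = ρ x * ρ s * (x * (1-x) * (s * (1-s))) := by ring
    _ = (ρ (x + s - x*s) * ρ (x/(x + s - x*s))) * ((1-x) / (x + s - x*s) * (x * (1-x) * (s * (1-s)))) := by
        rw [h3]; field_simp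
    _ = ρ (x + s - x * s) * ((x + s - x * s) * (1 - (x + s - x * s))) *
        (ρ (x / (x + s - x * s)) * (x / (x + s - x * s) * (s * (1 - x) / (x + s - x * s)))) := by
        field_simp; ring

private lemma key2 (ρ : ℝ → ℝ)
    (heq : ∀ x y : ℝ, 0 < x → x < y → y < 1 →
      ρ y * ρ (x / y) * (1 / y) = ρ x * ρ ((y - x) / (1 - x)) * (1 / (1 - x)))
    {m u : ℝ} (hm0 : 0 < m) (hm1 : m < 1) (hu0 : 0 < u) (hu1 : u < 1)
    (hfm : Fd ρ m ≠ 0) :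
    Fd ρ u = Fd ρ ((1 - u) / (1 - u * m)) := by
  set x := u * m with hxdef
  set s := m * (1 - u) / (1 - u * m) with hsdef
  have hum : u * m < 1 := by nlinarith
  have hden : (0:ℝ) < 1 - u * m := by linarith
  have hx0 : 0 < x := mul_pos hu0 hm0
  have hx1 : x < 1 := hum
  have hs0 : 0 < s := div_pos (mul_pos hm0 (by linarith)) hden
  have hs1 : s < 1 := by
    rw [hsdef, div_lt_one hden]; nlinarith
  -- x + s - x*s = m
  have hsum : x + s - x * s = m := by
    rw [hxdef, hsdef]; field_simp; ring
  have hsum' : s + x - s * x = m := by rw [← hsum]; ring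
  have hxm : x / m = u := by
    rw [hxdef]; field_simp
  have hsm : s / m = (1 - u) / (1 - u * m) := by
    rw [hsdef]; field_simp
  have h1 := key1 ρ heq hx0 hx1 hs0 hs1
  have h2 := key1 ρ heq hs0 hs1 hx0 hx1
  rw [hsum, hxm] at h1
  rw [hsum', hsm] at h2
  have : Fd ρ m * Fd ρ u = Fd ρ m * Fd ρ ((1 - u) / (1 - u * m)) := by
    rw [← h1, ← h2]; ring
  exact mul_left_cancel₀ hfm this

/-- If a continuous density `ρ` on `(0,1)` satisfies the functional equation
`ρ(y)·ρ(x/y)·(1/y) = ρ(x)·ρ((y−x)/(1−x))·(1/(1−x))` for all `0 < x < y < 1`, then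
`ρ(x) = C/(x(1−x))` for some constant `C ≥ 0`. -/
theorem density_functional_equation (ρ : ℝ → ℝ)
    (hcont : ContinuousOn ρ (Set.Ioo 0 1))
    (hnn : ∀ x ∈ Set.Ioo (0:ℝ) 1, 0 ≤ ρ x)
    (heq : ∀ x y : ℝ, 0 < x → x < y → y < 1 →
      ρ y * ρ (x / y) * (1 / y) = ρ x * ρ ((y - x) / (1 - x)) * (1 / (1 - x))) :
    ∃ C : ℝ, 0 ≤ C ∧ ∀ x ∈ Set.Ioo (0:ℝ) 1, ρ x = C / (x * (1 - x)) := by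
  by_cases hP : ∀ x ∈ Ioo (0:ℝ) 1, Fd ρ x = 0
  · refine ⟨0, le_refl 0, fun x hx => ?_⟩
    have h := hP x hx
    unfold Fd at h
    have hx0 := hx.1; have hx1 := hx.2
    have hne : x * (1 - x) ≠ 0 :=
      ne_of_gt (mul_pos hx.1 (by linarith [hx.2] : (0:ℝ) < 1 - x))
    have : ρ x = 0 := by
      rcases mul_eq_zero.mp h with h' | h'
      · exact h'
      · exact absurd h' hne
    rw [this, zero_div]
  · push_neg at hP
    obtain ⟨m₁, hm₁, hfm₁⟩ := hP
    -- continuity of Fd ρ on Ioo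
    have hFc : ContinuousOn (Fd ρ) (Ioo 0 1) := by
      have : ContinuousOn (fun x : ℝ => x * (1 - x)) (Ioo 0 1) := by fun_prop
      exact hcont.mul this
    have hca : ContinuousAt (Fd ρ) m₁ :=
      hFc.continuousAt (Ioo_mem_nhds hm₁.1 hm₁.2)
    have hev : ∀ᶠ m in nhds m₁, m ∈ Ioo (0:ℝ) 1 ∧ Fd ρ m ≠ 0 := by
      have h1 : ∀ᶠ m in nhds m₁, Fd ρ m ≠ 0 := hca.eventually_ne hfm₁
      have h2 : ∀ᶠ m in nhds m₁, m ∈ Ioo (0:ℝ) 1 := isOpen_Ioo.mem_nhds hm₁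
      exact h2.and h1
    obtain ⟨δ, hδ0, hδ⟩ := Metric.eventually_nhds_iff.mp hev
    -- local constancy
    have key3 : ∀ v ∈ Ioo (0:ℝ) 1, ∃ ε > 0, ∀ v' ∈ Ioo (0:ℝ) 1,
        |v' - v| < ε → Fd ρ v' = Fd ρ v := by
      intro v hv
      obtain ⟨hv0, hv1⟩ := hv
      set w := (1 - v) / (1 - v * m₁) with hwdef
      have hvm : v * m₁ < v := by nlinarith [hm₁.1, hm₁.2]
      have hden : (0:ℝ) < 1 - v * m₁ := by linarith
      have hw0 : 0 < w := div_pos (by linarith) hden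
      have hw1 : w < 1 := by rw [hwdef, div_lt_one hden]; linarith
      have hvw : Fd ρ v = Fd ρ w := key2 ρ heq hm₁.1 hm₁.2 hv0 hv1 hfm₁
      set μ : ℝ → ℝ := fun v' => (v' - (1 - w)) / (v' * w) with hμdef
      have hμv : μ v = m₁ := by
        rw [hμdef]; simp only
        rw [hwdef]
        rw [div_eq_iff (by positivity)]
        field_simp
        ring
      have hcm : ContinuousAt μ v := by
        apply ContinuousAt.div
        · fun_prop
        · fun_prop
        · exact mul_ne_zero hv0.ne' hw0.ne'
      have htend : Tendsto μ (nhds v) (nhds m₁) := hμv ▸ hcm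
      have hev2 : ∀ᶠ v' in nhds v, dist (μ v') m₁ < δ :=
        Metric.tendsto_nhds.mp htend δ hδ0
      obtain ⟨ε, hε0, hball⟩ := Metric.eventually_nhds_iff.mp hev2
      refine ⟨ε, hε0, fun v' hv' hlt => ?_⟩
      obtain ⟨hv'0, hv'1⟩ := hv'
      have hμd : dist (μ v') m₁ < δ := hball (show dist v' v < ε by rwa [Real.dist_eq])
      obtain ⟨hμIoo, hμne⟩ := hδ hμd
      have hkey := key2 ρ heq hμIoo.1 hμIoo.2 hw0 hw1 hμne
      have hσ : (1 - w) / (1 - w * μ v') = v' := by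
        have h1w : 1 - w * μ v' = (1 - w) / v' := by
          rw [hμdef]; field_simp; ring
        rw [h1w]
        rw [div_div_eq_mul_div, mul_comm, mul_div_assoc, div_self (by linarith : (1:ℝ) - w ≠ 0), mul_one]
      rw [hσ] at hkey
      rw [← hkey, ← hvw]
    -- clopen argument
    set C := Fd ρ m₁ with hCdef
    have hall : ∀ v ∈ Ioo (0:ℝ) 1, Fd ρ v = C := by
      by_contra hcon
      push_neg at hcon
      obtain ⟨v₀, hv₀, hfv₀⟩ := hcon
      set S : Set ℝ := {v | v ∈ Ioo (0:ℝ) 1 ∧ Fd ρ v = C} with hSdef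
      set S' : Set ℝ := {v | v ∈ Ioo (0:ℝ) 1 ∧ Fd ρ v ≠ C} with hS'def
      have hopen : ∀ (T : Set ℝ) (p : ℝ → Prop), T = {v | v ∈ Ioo (0:ℝ) 1 ∧ p (Fd ρ v)} →
          IsOpen T := by
        intro T p hT
        rw [Metric.isOpen_iff]
        intro v hvT
        rw [hT] at hvT
        obtain ⟨hvI, hvp⟩ := hvT
        obtain ⟨ε, hε0, hεc⟩ := key3 v hvI
        refine ⟨min ε (min v (1 - v)),
          lt_min hε0 (lt_min hvI.1 (by linarith [hvI.2])), fun y hy => ?_⟩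
        rw [Metric.mem_ball, Real.dist_eq] at hy
        have h1 : |y - v| < ε := lt_of_lt_of_le hy (min_le_left _ _)
        have h2 : |y - v| < v := lt_of_lt_of_le hy (le_trans (min_le_right _ _) (min_le_left _ _))
        have h3 : |y - v| < 1 - v := lt_of_lt_of_le hy (le_trans (min_le_right _ _) (min_le_right _ _))
        rw [abs_lt] at h2 h3
        have hyI : y ∈ Ioo (0:ℝ) 1 := ⟨by linarith [h2.1], by linarith [h3.2]⟩
        have := hεc y hyI h1
        rw [hT]
        exact ⟨hyI, this ▸ hvp⟩
      have hSopen : IsOpen S := hopen S (fun t => t = C) rfl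
      have hS'open : IsOpen S' := hopen S' (fun t => t ≠ C) rfl
      have hpre := (isPreconnected_Ioo (a := (0:ℝ)) (b := 1)) S S' hSopen hS'open
        (fun v hv => by by_cases h : Fd ρ v = C
                        · exact Or.inl ⟨hv, h⟩
                        · exact Or.inr ⟨hv, h⟩)
        ⟨m₁, hm₁, hm₁, rfl⟩ ⟨v₀, hv₀, hv₀, hfv₀⟩
      obtain ⟨z, _, hzS, hzS'⟩ := hpre
      exact hzS'.2 hzS.2
    refine ⟨C, ?_, fun x hx => ?_⟩
    · rw [hCdef]
      unfold Fd
      exact mul_nonneg (hnn m₁ hm₁) (le_of_lt (mul_pos hm₁.1 (by linarith [hm₁.2])))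
    · have h := hall x hx
      unfold Fd at h
      have hne : x * (1 - x) ≠ 0 :=
        ne_of_gt (mul_pos hx.1 (by linarith [hx.2] : (0:ℝ) < 1 - x))
      rw [eq_div_iff hne]
      exact h
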